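/- Let (Ω, μ) be a finite measure space, let λ > 0 and let a ≤ b be real numbers. Define the admissible set U_ad := { u ∈ L²(μ) : a ≤ u(x) ≤ b for μ-a.e. x }. Then for p ∈ L²(μ) and u ∈ U_ad, the variational inequality ∫_Ω (λ u + p)(v − u) dμ ≥ 0 for all v ∈ U_ad holds if and only if u(x) = max(a, min(b, −λ⁻¹ p(x))) for μ-a.e. x. -/

import Mathlib

open MeasureTheory

private lemma proj_key (a b q c : ℝ) (hab : a ≤ b) (h1 : a ≤ c) (h2 : c ≤ b) :
    (q - max a (min b q)) * (c - max a (min b q)) ≤ 0 := by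
  rcases le_total q a with h | h
  · rw [min_eq_right (h.trans hab), max_eq_left h]
    nlinarith
  · rcases le_total b q with h' | h'
    · rw [min_eq_left h', max_eq_right hab]
      nlinarith
    · rw [min_eq_right h', max_eq_right h]
      simp

private lemma vi_pointwise_bwd (lam a b pp c : ℝ) (hlam : 0 < lam) (hab : a ≤ b)
    (h1 : a ≤ c) (h2 : c ≤ b) :
    0 ≤ (lam * max a (min b (-lam⁻¹ * pp)) + pp) * (c - max a (min b (-lam⁻¹ * pp))) := by
  have h0 : lam ≠ 0 := hlam.ne'
  have hp : pp = -lam * (-lam⁻¹ * pp) := by field_simp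
  set q := -lam⁻¹ * pp with hq
  rw [hp]
  nlinarith [mul_nonpos_of_nonneg_of_nonpos hlam.le (proj_key a b q c hab h1 h2)]

private lemma vi_pointwise_fwd (lam a b pp c : ℝ) (hlam : 0 < lam) (hab : a ≤ b)
    (h1 : a ≤ c) (h2 : c ≤ b) :
    (lam * c + pp) * (max a (min b (-lam⁻¹ * pp)) - c)
      ≤ -(lam * (c - max a (min b (-lam⁻¹ * pp))) ^ 2) := by
  have h0 : lam ≠ 0 := hlam.ne'
  have hp : pp = -lam * (-lam⁻¹ * pp) := by field_simp
  set q := -lam⁻¹ * pp with hq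
  rw [hp]
  nlinarith [mul_nonpos_of_nonneg_of_nonpos hlam.le (proj_key a b q c hab h1 h2)]

private lemma mul_integrable_of_memL2 {α : Type*} [MeasurableSpace α] {μ : Measure α}
    {f g : α → ℝ} (hf : MemLp f 2 μ) (hg : MemLp g 2 μ) :
    Integrable (fun x => f x * g x) μ := by
  have h1 := (hf.add hg).integrable_sq
  have h2 := hf.integrable_sq
  have h3 := hg.integrable_sq
  have h := ((h1.sub h2).sub h3).const_mul (1/2 : ℝ)
  refine h.congr (Filter.Eventually.of_forall fun x => ?_)
  simp only [Pi.add_apply, Pi.sub_apply]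
  ring

/-- on a finite measure space, for `λ > 0`, `a ≤ b`, `p ∈ L²(μ)` and an
admissible control `u ∈ U_ad = {u ∈ L²(μ) : a ≤ u ≤ b a.e.}`, the variational inequality
`∫ (λu + p)(v − u) dμ ≥ 0` for all `v ∈ U_ad` holds if and only if
`u = max(a, min(b, −λ⁻¹ p))` a.e. -/
theorem control_variational_inequality_iff_projection
    {Ω : Type*} [MeasurableSpace Ω] (μ : Measure Ω) [IsFiniteMeasure μ]
    (lam : ℝ) (hlam : 0 < lam) (a b : ℝ) (hab : a ≤ b)
    (p u : Lp ℝ 2 μ) (hu : ∀ᵐ x ∂μ, a ≤ u x ∧ u x ≤ b) :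
    (∀ v : Lp ℝ 2 μ, (∀ᵐ x ∂μ, a ≤ v x ∧ v x ≤ b) →
        0 ≤ ∫ x, (lam * u x + p x) * (v x - u x) ∂μ) ↔
      (∀ᵐ x ∂μ, u x = max a (min b (-lam⁻¹ * p x))) := by
  set f : Ω → ℝ := fun x => max a (min b (-lam⁻¹ * p x)) with hfdef
  have hmeas : AEStronglyMeasurable f μ := by
    have hcont : Continuous fun t : ℝ => max a (min b (-lam⁻¹ * t)) :=
      continuous_const.max (continuous_const.min (continuous_const.mul continuous_id))
    exact hcont.comp_aestronglyMeasurable (Lp.aestronglyMeasurable p)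
  have hfab : ∀ x, a ≤ f x ∧ f x ≤ b := fun x =>
    ⟨le_max_left _ _, max_le hab (min_le_left _ _)⟩
  have hfmem : MemLp f 2 μ := by
    refine MemLp.of_bound hmeas (max |a| |b|) (Filter.Eventually.of_forall fun x => ?_)
    have h1 := (hfab x).1
    have h2 := (hfab x).2
    rw [Real.norm_eq_abs, abs_le]
    constructor
    · have : -|a| ≤ a := neg_abs_le a
      exact le_trans (neg_le_neg (le_max_left |a| |b|)) (this.trans h1)
    · exact h2.trans ((le_abs_self b).trans (le_max_right _ _))
  set w : Lp ℝ 2 μ := hfmem.toLp f with hwdef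
  have hw : (w : Ω → ℝ) =ᵐ[μ] f := hfmem.coeFn_toLp
  constructor
  · intro H
    have hvw : ∀ᵐ x ∂μ, a ≤ w x ∧ w x ≤ b := by
      filter_upwards [hw] with x hx
      rw [hx]; exact hfab x
    have h0 := H w hvw
    have hA : MemLp (fun x => lam * u x + p x) 2 μ :=
      ((Lp.memLp u).const_mul lam).add (Lp.memLp p)
    have hB : MemLp (fun x => (w : Ω → ℝ) x - u x) 2 μ :=
      (Lp.memLp w).sub (Lp.memLp u)
    have hg : Integrable (fun x => (lam * u x + p x) * (w x - u x)) μ :=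
      mul_integrable_of_memL2 hA hB
    have hle : ∀ᵐ x ∂μ, (lam * u x + p x) * (w x - u x) ≤ -(lam * (u x - f x) ^ 2) := by
      filter_upwards [hw, hu] with x hx hux
      rw [hx]
      exact vi_pointwise_fwd lam a b (p x) (u x) hlam hab hux.1 hux.2
    have hle0 : ∀ᵐ x ∂μ, (lam * u x + p x) * (w x - u x) ≤ 0 := by
      filter_upwards [hle] with x hx
      nlinarith [sq_nonneg (u x - f x)]
    have hint0 : ∫ x, (lam * u x + p x) * (w x - u x) ∂μ = 0 :=
      le_antisymm (integral_nonpos_of_ae hle0) h0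
    have hneg : ∫ x, -((lam * u x + p x) * (w x - u x)) ∂μ = 0 := by
      rw [integral_neg, hint0, neg_zero]
    have hnonneg : 0 ≤ᵐ[μ] fun x => -((lam * u x + p x) * (w x - u x)) := by
      filter_upwards [hle0] with x hx
      simpa using hx
    have hzero : (fun x => -((lam * u x + p x) * (w x - u x))) =ᵐ[μ] 0 :=
      (integral_eq_zero_iff_of_nonneg_ae hnonneg hg.neg).mp hneg
    filter_upwards [hzero, hle] with x hx hlex
    have hzx : (lam * u x + p x) * (w x - u x) = 0 := by
      have : -((lam * u x + p x) * (w x - u x)) = 0 := hx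
      linarith
    rw [hzx] at hlex
    have hsq : (u x - f x) ^ 2 = 0 := by nlinarith [sq_nonneg (u x - f x)]
    have := pow_eq_zero_iff (n := 2) (by norm_num) |>.mp hsq
    have := sub_eq_zero.mp this
    exact this
  · intro H v hv
    apply integral_nonneg_of_ae
    filter_upwards [H, hv] with x hx hvx
    show (0 : ℝ) ≤ (lam * u x + p x) * (v x - u x)
    rw [hx]
    exact vi_pointwise_bwd lam a b (p x) (v x) hlam hab hvx.1 hvx.2
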